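/- Suppose F ∈ A satisfies TF = F. Then for every k ≥ 0 the polynomial p_k = T^k(z) divides the polynomial W(x,z) := F(x,z) − F(x,0) in A. -/

import Mathlib

open Polynomial

/-- **Lemma 1.** If `F(x,z)` is invariant under `T` (the `R`-algebra
endomorphism of `A = R[z]` with `T(z) = p`), then each iterate
`p_k = T^k(z)` divides `W(x,z) = F(x,z) - F(x,0)` in `A`. -/
theorem granville_variation_lemma1
    {K : Type*} [Field K] {n : ℕ} (hn : 1 ≤ n)
    (p : Polynomial (MvPolynomial (Fin n) K))
    (F : Polynomial (MvPolynomial (Fin n) K))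
    (hF : Polynomial.aeval p F = F) :
    ∀ k : ℕ, (⇑(Polynomial.aeval p))^[k] X ∣ F - C (F.coeff 0) := by
  have hW : Polynomial.aeval p (F - C (F.coeff 0)) = F - C (F.coeff 0) := by
    rw [map_sub, hF, aeval_C]; rfl
  intro k
  induction k with
  | zero => exact X_dvd_iff.mpr (by simp)
  | succ k ih =>
    rw [Function.iterate_succ_apply']
    calc (Polynomial.aeval p) ((⇑(Polynomial.aeval p))^[k] X)
        ∣ Polynomial.aeval p (F - C (F.coeff 0)) := by
          obtain ⟨c, hc⟩ := ih
          exact ⟨Polynomial.aeval p c, by rw [hc, map_mul]⟩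
      _ = F - C (F.coeff 0) := hW
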